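/- Let F be a field, and let f ∈ F[[x₁,…,xₙ]][y] be a polynomial in y over the multivariate formal power series ring, and let μ ∈ F satisfy f(0, μ) = 0 and ∂_y f(0, μ) ≠ 0 (where evaluating at 0 means taking the constant term of each power series coefficient). Then there exists a unique power series φ ∈ F[[x₁,…,xₙ]] with constant term μ such that f(x, φ) = 0. -/

import Mathlib

open Polynomial

namespace UPSR

variable {F : Type*} [Field F] {n : ℕ}

/-- total degree of an exponent -/
def dg (d : Fin n →₀ ℕ) : ℕ := d.sum fun _ k => k

lemma dg_add (a b : Fin n →₀ ℕ) : dg (a + b) = dg a + dg b :=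
  Finsupp.sum_add_index' (fun _ => rfl) (fun _ _ _ => rfl)

lemma dg_eq_zero {d : Fin n →₀ ℕ} (h : dg d = 0) : d = 0 := by
  ext i
  by_cases hi : i ∈ d.support
  · exact (Finset.sum_eq_zero_iff.mp h) i hi
  · simpa using Finsupp.notMem_support_iff.mp hi

/-- the ideal of power series with vanishing coefficients in degrees `< N` -/
def J (F : Type*) [Field F] (n N : ℕ) : Ideal (MvPowerSeries (Fin n) F) where
  carrier := {f | ∀ d, dg d < N → MvPowerSeries.coeff d f = 0}
  zero_mem' := fun d _ => map_zero _
  add_mem' := fun hx hy d hd => by rw [map_add, hx d hd, hy d hd, add_zero]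
  smul_mem' := fun r x hx d hd => by
    rw [smul_eq_mul, MvPowerSeries.coeff_mul]
    refine Finset.sum_eq_zero fun p hp => ?_
    rw [Finset.HasAntidiagonal.mem_antidiagonal] at hp
    have : dg p.2 < N := lt_of_le_of_lt (by rw [← hp, dg_add]; exact Nat.le_add_left _ _) hd
    rw [hx p.2 this, mul_zero]

lemma mem_J {N : ℕ} {x : MvPowerSeries (Fin n) F} :
    x ∈ J F n N ↔ ∀ d, dg d < N → MvPowerSeries.coeff d x = 0 := Iff.rfl

lemma J_antitone {a b : ℕ} (h : a ≤ b) : J F n b ≤ J F n a :=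
  fun _ hx d hd => hx d (lt_of_lt_of_le hd h)

lemma J_mul_mem {a b : ℕ} {x y : MvPowerSeries (Fin n) F}
    (hx : x ∈ J F n a) (hy : y ∈ J F n b) : x * y ∈ J F n (a + b) := by
  intro d hd
  rw [MvPowerSeries.coeff_mul]
  refine Finset.sum_eq_zero fun p hp => ?_
  rw [Finset.HasAntidiagonal.mem_antidiagonal] at hp
  have hsum : dg p.1 + dg p.2 < a + b := by rw [← dg_add, hp]; exact hd
  rcases lt_or_ge (dg p.1) a with h1 | h1
  · rw [hx p.1 h1, zero_mul]
  · rw [hy p.2 (by omega), mul_zero]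

lemma J_pow_mem {a : ℕ} {x : MvPowerSeries (Fin n) F} (hx : x ∈ J F n a) (i : ℕ) :
    x ^ i ∈ J F n (i * a) := by
  induction i with
  | zero => intro d hd; omega
  | succ i ih =>
      have := J_mul_mem ih hx
      rw [← pow_succ] at this
      simpa [Nat.succ_mul] using this

lemma J_hausdorff {x : MvPowerSeries (Fin n) F} (h : ∀ N, x ∈ J F n N) : x = 0 := by
  ext d
  simpa using h (dg d + 1) d (Nat.lt_succ_self _)

lemma mem_J_one {x : MvPowerSeries (Fin n) F}
    (h : MvPowerSeries.constantCoeff x = 0) : x ∈ J F n 1 := by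
  intro d hd
  have : d = 0 := dg_eq_zero (by omega)
  rw [this, MvPowerSeries.coeff_zero_eq_constantCoeff]
  exact h

lemma cc_eval (p : Polynomial (MvPowerSeries (Fin n) F)) (b : MvPowerSeries (Fin n) F) :
    MvPowerSeries.constantCoeff (p.eval b)
      = (p.map (MvPowerSeries.constantCoeff)).eval
          (MvPowerSeries.constantCoeff b) := by
  rw [eval_map]
  rw [show p.eval b = p.eval₂ (RingHom.id _) b from rfl]
  rw [hom_eval₂]
  rfl

end UPSR

/-- Formal implicit function theorem: if `f ∈ F[[x₁,…,xₙ]][y]` satisfies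
`f(0, μ) = 0` and `∂_y f(0, μ) ≠ 0`, then there is a unique power series `φ`
with constant term `μ` such that `f(x, φ) = 0`. -/
theorem unique_power_series_root {F : Type*} [Field F] {n : ℕ}
    (f : Polynomial (MvPowerSeries (Fin n) F)) (μ : F)
    (h0 : (f.map (MvPowerSeries.constantCoeff)).eval μ = 0)
    (h1 : ((derivative f).map (MvPowerSeries.constantCoeff)).eval μ ≠ 0) :
    ∃! φ : MvPowerSeries (Fin n) F,
      MvPowerSeries.constantCoeff φ = μ ∧ f.eval φ = 0 := by
  classical
  set cc := (MvPowerSeries.constantCoeff : MvPowerSeries (Fin n) F →+* F) with hccdef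
  set f' := derivative f with hf'def
  -- Newton iteration
  let c : ℕ → MvPowerSeries (Fin n) F := fun k =>
    Nat.recOn k (MvPowerSeries.C μ)
      fun _ b => b - f.eval b * Ring.inverse (f'.eval b)
  have hc : ∀ k, c (k + 1) = c k - f.eval (c k) * Ring.inverse (f'.eval (c k)) :=
    fun k => rfl
  have hcc : ∀ k, cc (c k) = μ := by
    intro k
    induction k with
    | zero => exact MvPowerSeries.constantCoeff_C μ
    | succ k ih =>
        rw [hc, map_sub, map_mul, ih, UPSR.cc_eval, ih, h0, zero_mul, sub_zero]
  have hf'c : ∀ k, IsUnit (f'.eval (c k)) := by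
    intro k
    rw [MvPowerSeries.isUnit_iff_constantCoeff, UPSR.cc_eval, hcc k]
    exact isUnit_iff_ne_zero.mpr h1
  have hfcJ : ∀ k, f.eval (c k) ∈ UPSR.J F n (k + 1) := by
    intro k
    induction k with
    | zero =>
        apply UPSR.mem_J_one
        rw [UPSR.cc_eval, hcc 0, h0]
    | succ k ih =>
        rw [← taylor_eval_sub (c k), hc, sub_eq_add_neg, sub_eq_add_neg,
          add_neg_cancel_comm]
        rw [eval_eq_sum, sum_over_range' _ _ _ (lt_add_of_pos_right _ zero_lt_two),
          ← Finset.sum_range_add_sum_Ico _ (Nat.le_add_left _ _)]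
        swap
        · intro i; rw [zero_mul]
        refine Ideal.add_mem _ ?_ ?_
        · erw [Finset.sum_range_succ]
          rw [Finset.range_one, Finset.sum_singleton,
            taylor_coeff_zero, taylor_coeff_one, pow_zero, pow_one, mul_one, mul_neg,
            mul_left_comm, Ring.mul_inverse_cancel _ (hf'c k), mul_one, add_neg_cancel]
          exact Ideal.zero_mem _
        · refine Submodule.sum_mem _ ?_
          simp only [Finset.mem_Ico]
          rintro i ⟨h2i, _⟩
          have aux : k + 2 ≤ i * (k + 1) := by nlinarith only [h2i]
          refine Ideal.mul_mem_left _ _ (UPSR.J_antitone aux ?_)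
          exact UPSR.J_pow_mem ((UPSR.J F n (k+1)).neg_mem
            (Ideal.mul_mem_right _ _ ih)) i
  -- the Cauchy property
  have hcauchy : ∀ m k, c (m + k) - c m ∈ UPSR.J F n m := by
    intro m k
    induction k with
    | zero => simp only [Nat.add_zero, sub_self]; exact (UPSR.J F n m).zero_mem
    | succ k ih =>
        have : c (m + (k+1)) - c m = (c (m+k) - c m)
            - f.eval (c (m+k)) * Ring.inverse (f'.eval (c (m+k))) := by
          rw [show m + (k+1) = (m+k) + 1 from rfl, hc]; ring
        rw [this]
        refine Ideal.sub_mem _ ih ?_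
        exact UPSR.J_antitone (by omega)
          (Ideal.mul_mem_right _ _ (hfcJ (m+k)))
  -- the limit
  let φ : MvPowerSeries (Fin n) F := fun d => MvPowerSeries.coeff d (c (UPSR.dg d + 1))
  have hφc : ∀ N, φ - c N ∈ UPSR.J F n N := by
    intro N d hd
    have h1d : UPSR.dg d + 1 ≤ N := hd
    obtain ⟨k, hk⟩ := Nat.exists_eq_add_of_le h1d
    have := hcauchy (UPSR.dg d + 1) k d (Nat.lt_succ_self _)
    rw [map_sub] at this ⊢
    rw [hk]
    have hφd : MvPowerSeries.coeff d φ = MvPowerSeries.coeff d (c (UPSR.dg d + 1)) :=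
      rfl
    rw [sub_eq_zero] at this
    rw [hφd, sub_eq_zero]
    exact this.symm
  -- φ is a root
  have hroot : f.eval φ = 0 := by
    apply UPSR.J_hausdorff
    intro N
    have hdvd : (φ - c N) ∣ (f.eval φ - f.eval (c N)) := sub_dvd_eval_sub _ _ f
    obtain ⟨q, hq⟩ := hdvd
    have h1' : f.eval φ - f.eval (c N) ∈ UPSR.J F n N := by
      rw [hq]; exact Ideal.mul_mem_right _ _ (hφc N)
    have h2' : f.eval (c N) ∈ UPSR.J F n N :=
      UPSR.J_antitone (Nat.le_succ N) (hfcJ N)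
    simpa using Ideal.add_mem _ h1' h2'
  have hφμ : cc φ = μ := by
    have h01 := hφc 1 0 (by simp [UPSR.dg])
    rw [map_sub, sub_eq_zero] at h01
    rw [← MvPowerSeries.coeff_zero_eq_constantCoeff_apply, h01,
      MvPowerSeries.coeff_zero_eq_constantCoeff_apply, hcc 1]
  refine ⟨φ, ⟨hφμ, hroot⟩, ?_⟩
  -- uniqueness
  rintro ψ ⟨hψμ, hψroot⟩
  obtain ⟨g, hg⟩ := (dvd_iff_isRoot.mpr hroot : (X - C φ) ∣ f)
  have hgψ : cc (g.eval ψ) ≠ 0 := by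
    have hd : f' = g + (X - C φ) * derivative g := by
      rw [hf'def, hg, derivative_mul, derivative_sub, derivative_X, derivative_C,
        sub_zero, one_mul]
    have hgφ : g.eval φ = f'.eval φ := by
      rw [hd]; simp
    have e1 : cc (g.eval ψ) = (g.map cc).eval μ := by rw [UPSR.cc_eval, hψμ]
    have e2 : cc (g.eval φ) = (g.map cc).eval μ := by rw [UPSR.cc_eval, hφμ]
    rw [e1, ← e2, hgφ, UPSR.cc_eval, hφμ]
    exact h1
  have : (ψ - φ) * g.eval ψ = 0 := by
    have := hψroot
    rw [hg] at this
    simpa using this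
  rcases mul_eq_zero.mp this with h | h
  · exact sub_eq_zero.mp h
  · exact absurd (by rw [h, map_zero]) hgψ
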